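/- Let (V, g) be ℝ⁴ with orthonormal basis (e₁,e₂,e₃,e₄) of signs (+,−,+,−), let λ, ε ∈ {±1} (with |λ| = |ε| = 1) and a₀ ∈ ℝ, and define φ by φe₁ = λe₂ + a₀(e₃+e₄), φe₂ = λe₁ − (ε/λ)a₀(e₃+e₄), φe₃ = εe₄ − a₀(e₁ + (ε/λ)e₂), φe₄ = εe₃ + a₀(e₁ + (ε/λ)e₂). Then φ² = Id and g(φX,φY) = −g(X,Y), so (g, φ) is an almost para-Hermitian structure. -/

import Mathlib

open Module

private lemma eigAux14 (φ : (Fin 4 → ℝ) →ₗ[ℝ] (Fin 4 → ℝ)) (v1 v2 w1 w2 : Fin 4 → ℝ)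
    (hv1 : φ v1 = v1) (hv2 : φ v2 = v2) (hw1 : φ w1 = -w1) (hw2 : φ w2 = -w2)
    (liv : LinearIndependent ℝ ![v1, v2]) (liw : LinearIndependent ℝ ![w1, w2]) :
    Module.finrank ℝ (Module.End.eigenspace (φ : Module.End ℝ (Fin 4 → ℝ)) 1) = 2 ∧
    Module.finrank ℝ (Module.End.eigenspace (φ : Module.End ℝ (Fin 4 → ℝ)) (-1)) = 2 := by
  set p := Module.End.eigenspace (φ : Module.End ℝ (Fin 4 → ℝ)) 1 with hp
  set q := Module.End.eigenspace (φ : Module.End ℝ (Fin 4 → ℝ)) (-1) with hq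
  have hv1m : v1 ∈ p := by rw [hp, Module.End.mem_eigenspace_iff]; simpa using hv1
  have hv2m : v2 ∈ p := by rw [hp, Module.End.mem_eigenspace_iff]; simpa using hv2
  have hw1m : w1 ∈ q := by rw [hq, Module.End.mem_eigenspace_iff]; simpa using hw1
  have hw2m : w2 ∈ q := by rw [hq, Module.End.mem_eigenspace_iff]; simpa using hw2
  have hpq : p ⊓ q = ⊥ := by
    rw [eq_bot_iff]
    intro x hx
    obtain ⟨h1, h2⟩ := Submodule.mem_inf.mp hx
    rw [Module.End.mem_eigenspace_iff] at h1 h2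
    have : (1 : ℝ) • x = (-1 : ℝ) • x := by rw [← h1, ← h2]
    simp only [one_smul, neg_smul, one_smul] at this
    have hx0 : x = 0 := by
      have h2x : (2:ℝ) • x = 0 := by
        rw [two_smul]; nth_rewrite 2 [this]; abel
      rcases smul_eq_zero.mp h2x with h | h
      · norm_num at h
      · exact h
    simp [hx0]
  have li2p : LinearIndependent ℝ (fun i : Fin 2 => (![(⟨v1, hv1m⟩ : p), ⟨v2, hv2m⟩] : Fin 2 → p) i) := by
    apply LinearIndependent.of_comp p.subtype
    convert liv using 1
    funext i; fin_cases i <;> rfl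
    all_goals rfl
  have li2q : LinearIndependent ℝ (fun i : Fin 2 => (![(⟨w1, hw1m⟩ : q), ⟨w2, hw2m⟩] : Fin 2 → q) i) := by
    apply LinearIndependent.of_comp q.subtype
    convert liw using 1
    funext i; fin_cases i <;> rfl
    all_goals rfl
  have hple : 2 ≤ finrank ℝ p := by simpa using li2p.fintype_card_le_finrank
  have hqle : 2 ≤ finrank ℝ q := by simpa using li2q.fintype_card_le_finrank
  have hsum : finrank ℝ (p ⊔ q : Submodule ℝ (Fin 4 → ℝ)) + finrank ℝ (p ⊓ q : Submodule ℝ (Fin 4 → ℝ))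
      = finrank ℝ p + finrank ℝ q := Submodule.finrank_sup_add_finrank_inf_eq p q
  have hbot : finrank ℝ (p ⊓ q : Submodule ℝ (Fin 4 → ℝ)) = 0 := by rw [hpq]; simp
  have h4 : finrank ℝ (p ⊔ q : Submodule ℝ (Fin 4 → ℝ)) ≤ 4 := by
    have := Submodule.finrank_le (p ⊔ q)
    simpa using this
  omega

theorem stmt14 (lam ε : ℝ) (hlam : lam = 1 ∨ lam = -1) (hε : ε = 1 ∨ ε = -1)
    (a₀ : ℝ)
    (g : (Fin 4 → ℝ) → (Fin 4 → ℝ) → ℝ)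
    (hg : ∀ x y : Fin 4 → ℝ, g x y = x 0 * y 0 - x 1 * y 1 + x 2 * y 2 - x 3 * y 3)
    (φ : (Fin 4 → ℝ) →ₗ[ℝ] (Fin 4 → ℝ))
    (h1 : φ (Pi.single 0 1 : Fin 4 → ℝ) =
      lam • (Pi.single 1 1 : Fin 4 → ℝ) +
        a₀ • ((Pi.single 2 1 : Fin 4 → ℝ) + (Pi.single 3 1 : Fin 4 → ℝ)))
    (h2 : φ (Pi.single 1 1 : Fin 4 → ℝ) =
      lam • (Pi.single 0 1 : Fin 4 → ℝ) -
        ((ε / lam) * a₀) • ((Pi.single 2 1 : Fin 4 → ℝ) + (Pi.single 3 1 : Fin 4 → ℝ)))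
    (h3 : φ (Pi.single 2 1 : Fin 4 → ℝ) =
      ε • (Pi.single 3 1 : Fin 4 → ℝ) -
        a₀ • ((Pi.single 0 1 : Fin 4 → ℝ) + (ε / lam) • (Pi.single 1 1 : Fin 4 → ℝ)))
    (h4 : φ (Pi.single 3 1 : Fin 4 → ℝ) =
      ε • (Pi.single 2 1 : Fin 4 → ℝ) +
        a₀ • ((Pi.single 0 1 : Fin 4 → ℝ) + (ε / lam) • (Pi.single 1 1 : Fin 4 → ℝ))) :
    (∀ x, φ (φ x) = x) ∧
    (∀ x y, g (φ x) (φ y) = - g x y) ∧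
    Module.finrank ℝ (Module.End.eigenspace (φ : Module.End ℝ (Fin 4 → ℝ)) 1) = 2 ∧
    Module.finrank ℝ (Module.End.eigenspace (φ : Module.End ℝ (Fin 4 → ℝ)) (-1)) = 2 := by
  have hl2 : lam * lam = 1 := by rcases hlam with h | h <;> rw [h] <;> norm_num
  have he2 : ε * ε = 1 := by rcases hε with h | h <;> rw [h] <;> norm_num
  have hdiv : ε / lam = ε * lam := by
    rcases hlam with h | h <;> rw [h] <;> ring
  have hx : ∀ x : Fin 4 → ℝ, x = x 0 • (Pi.single 0 1 : Fin 4 → ℝ)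
      + x 1 • (Pi.single 1 1 : Fin 4 → ℝ)
      + x 2 • (Pi.single 2 1 : Fin 4 → ℝ) + x 3 • (Pi.single 3 1 : Fin 4 → ℝ) := by
    intro x
    funext i
    fin_cases i <;> simp [Pi.single_apply]
  have hphi : ∀ x : Fin 4 → ℝ, φ x =
      ![lam * x 1 - a₀ * x 2 + a₀ * x 3,
        lam * x 0 - (ε * lam * a₀) * x 2 + (ε * lam * a₀) * x 3,
        a₀ * x 0 - (ε * lam * a₀) * x 1 + ε * x 3,
        a₀ * x 0 - (ε * lam * a₀) * x 1 + ε * x 2] := by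
    intro x
    conv_lhs => rw [hx x]
    rw [map_add, map_add, map_add, map_smul, map_smul, map_smul, map_smul, h1, h2, h3, h4,
      hdiv]
    funext i
    fin_cases i <;> simp [Pi.single_apply] <;> ring
  refine ⟨?_, ?_, ?_⟩
  · -- φ² = id
    intro x
    rw [hphi, hphi]
    funext i
    rcases hlam with rfl | rfl <;> rcases hε with rfl | rfl <;> fin_cases i <;> simp <;> ring
  · -- metric anti-compatibility
    intro x y
    rw [hg, hg, hphi x, hphi y]
    rcases hlam with rfl | rfl <;> rcases hε with rfl | rfl <;> simp <;> ring
  · -- eigenspace dimensions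
    have e1 : φ ![1, lam, a₀, a₀] = ![1, lam, a₀, a₀] := by
      rw [hphi]
      funext i
      rcases hlam with rfl | rfl <;> rcases hε with rfl | rfl <;> fin_cases i <;> simp <;> ring
    have e2 : φ ![1, -lam, -a₀, -a₀] = -![1, -lam, -a₀, -a₀] := by
      rw [hphi]
      funext i
      rcases hlam with rfl | rfl <;> rcases hε with rfl | rfl <;> fin_cases i <;> simp <;> ring
    have e3 : φ ![0, 0, 1, 1] = ε • ![0, 0, 1, 1] := by
      rw [hphi]
      funext i
      fin_cases i <;> simp
    have e4 : φ ![ε * a₀, a₀ * lam, 1, -1] = (-ε) • ![ε * a₀, a₀ * lam, 1, -1] := by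
      rw [hphi]
      funext i
      rcases hlam with rfl | rfl <;> rcases hε with rfl | rfl <;> fin_cases i <;> simp <;> ring
    have li13 : LinearIndependent ℝ ![![1, lam, a₀, a₀], ![0, 0, 1, 1]] := by
      rw [LinearIndependent.pair_iff]
      intro s t h
      have c0 := congrFun h 0
      have c2 := congrFun h 2
      simp at c0 c2
      constructor
      · linarith
      · rw [c0] at c2; linarith
    have li24 : LinearIndependent ℝ ![![1, -lam, -a₀, -a₀], ![ε * a₀, a₀ * lam, 1, -1]] := by
      rw [LinearIndependent.pair_iff]
      intro s t h
      have c0 := congrFun h 0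
      have c2 := congrFun h 2
      have c3 := congrFun h 3
      simp at c0 c2 c3
      have ht : t = 0 := by linarith
      have hs : s = 0 := by rw [ht] at c0; simpa using c0
      exact ⟨hs, ht⟩
    have li14 : LinearIndependent ℝ ![![1, lam, a₀, a₀], ![ε * a₀, a₀ * lam, 1, -1]] := by
      rw [LinearIndependent.pair_iff]
      intro s t h
      have c0 := congrFun h 0
      have c2 := congrFun h 2
      have c3 := congrFun h 3
      simp at c0 c2 c3
      have ht : t = 0 := by linarith
      have hs : s = 0 := by rw [ht] at c0; simpa using c0
      exact ⟨hs, ht⟩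
    have li23 : LinearIndependent ℝ ![![1, -lam, -a₀, -a₀], ![0, 0, 1, 1]] := by
      rw [LinearIndependent.pair_iff]
      intro s t h
      have c0 := congrFun h 0
      have c2 := congrFun h 2
      simp at c0 c2
      constructor
      · linarith
      · rw [c0] at c2; linarith
    rcases hε with rfl | rfl
    · exact eigAux14 φ _ _ _ _ e1 (by simpa using e3) e2 (by simpa [neg_smul] using e4)
        li13 li24
    · exact eigAux14 φ _ _ _ _ e1 (by simpa [neg_smul] using e4) e2 (by simpa [neg_smul] using e3)
        li14 li23
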